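/- Let U be a nonempty connected open subset of ℂ^d and let A : U → Matrix (Fin m) (Fin n) ℂ be a family of complex m × n matrices each of whose entries x ↦ (A x)ᵢⱼ is holomorphic on U. Let r be the maximal value of rank(A x) for x ∈ U, and set Z = { x ∈ U | rank(A x) < r }. Then the set { x ∈ U | rank(A x) = r } is open (so Z is relatively closed in U), and Z has empty interior. -/

import Mathlib

open Metric Set Module Submodule Finset
open scoped Matrix

section Helpers

variable {E : Type*} [NormedAddCommGroup E] [NormedSpace ℂ E]

/-- Row selection does not increase rank. -/
lemma aux_rank_submatrix_row_le {k p q : ℕ} (B : Matrix (Fin p) (Fin q) ℂ)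
    (ρ : Fin k → Fin p) : (B.submatrix ρ id).rank ≤ B.rank := by
  have h : (B.submatrix ρ id).mulVecLin = (LinearMap.funLeft ℂ ℂ ρ).comp B.mulVecLin := by
    refine LinearMap.ext fun v => funext fun i => ?_
    simp [Matrix.mulVecLin_apply, Matrix.mulVec, dotProduct]
  rw [Matrix.rank, Matrix.rank, h, LinearMap.range_comp]
  exact Submodule.finrank_map_le _ _

/-- Column selection does not increase rank. -/
lemma aux_rank_submatrix_col_le {k p q : ℕ} (B : Matrix (Fin p) (Fin q) ℂ)
    (γ : Fin k → Fin q) : (B.submatrix id γ).rank ≤ B.rank := by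
  rw [← Matrix.rank_transpose (B.submatrix id γ), ← Matrix.rank_transpose B]
  exact aux_rank_submatrix_row_le (Bᵀ) γ

/-- A nonvanishing `k × k` minor forces the rank to be at least `k`. -/
lemma aux_le_rank_of_det_ne_zero {k p q : ℕ} (B : Matrix (Fin p) (Fin q) ℂ)
    (ρ : Fin k → Fin p) (γ : Fin k → Fin q) (h : (B.submatrix ρ γ).det ≠ 0) :
    k ≤ B.rank := by
  have hUnit : IsUnit (B.submatrix ρ γ) :=
    (Matrix.isUnit_iff_isUnit_det _).mpr (isUnit_iff_ne_zero.mpr h)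
  have h1 : (B.submatrix ρ γ).rank = k := by
    rw [Matrix.rank_of_isUnit _ hUnit, Fintype.card_fin]
  have h2 : B.submatrix ρ γ = (B.submatrix id γ).submatrix ρ id := rfl
  calc k = (B.submatrix ρ γ).rank := h1.symm
    _ ≤ (B.submatrix id γ).rank := by
        rw [h2]; exact aux_rank_submatrix_row_le _ ρ
    _ ≤ B.rank := aux_rank_submatrix_col_le _ γ

/-- From a matrix of rank `k` one can extract `k` linearly independent rows. -/
lemma aux_exists_rows_li {p q k : ℕ} (B : Matrix (Fin p) (Fin q) ℂ) (hk : B.rank = k) :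
    ∃ ρ : Fin k → Fin p, LinearIndependent ℂ (fun i => B (ρ i)) := by
  classical
  obtain ⟨t, hts, hspan, hli⟩ := exists_linearIndependent ℂ (Set.range B)
  have htfin : t.Finite := (Set.finite_range B).subset hts
  haveI := htfin.fintype
  have hcard : Fintype.card t = k := by
    rw [← Set.toFinset_card, ← finrank_span_set_eq_card hli, hspan,
      ← hk, Matrix.rank_eq_finrank_span_row]; rfl
  let e : Fin k ≃ t := (Fintype.equivFinOfCardEq hcard).symm
  have hmem : ∀ i : Fin k, (e i : Fin q → ℂ) ∈ Set.range B := fun i => hts (e i).2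
  choose ρ hρ using hmem
  refine ⟨ρ, ?_⟩
  have : (fun i => B (ρ i)) = fun i => ((e i : t) : Fin q → ℂ) := funext fun i => hρ i
  rw [this]
  exact hli.comp e e.injective

/-- From a matrix of rank `k` one can extract a `k × k` submatrix with nonzero determinant. -/
lemma aux_exists_submatrix_det_ne_zero {p q k : ℕ} (B : Matrix (Fin p) (Fin q) ℂ)
    (hk : B.rank = k) :
    ∃ (ρ : Fin k → Fin p) (γ : Fin k → Fin q), (B.submatrix ρ γ).det ≠ 0 := by
  obtain ⟨ρ, hρ⟩ := aux_exists_rows_li B hk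
  have h1 : (B.submatrix ρ id).rank = k := by
    have h := hρ.rank_matrix
    rwa [Fintype.card_fin] at h
  have h2 : (B.submatrix ρ id)ᵀ.rank = k := by rw [Matrix.rank_transpose]; exact h1
  obtain ⟨γ, hγ⟩ := aux_exists_rows_li (B.submatrix ρ id)ᵀ h2
  have hUnit : IsUnit ((B.submatrix ρ γ)ᵀ) :=
    Matrix.linearIndependent_rows_iff_isUnit.mp hγ
  have := (Matrix.isUnit_iff_isUnit_det _).mp hUnit
  rw [Matrix.det_transpose] at this
  exact ⟨ρ, γ, this.ne_zero⟩

/-- A finite product of differentiable functions is differentiable. -/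
lemma aux_diffOn_prod {ι : Type*} {U : Set E} (s : Finset ι) (f : ι → E → ℂ)
    (h : ∀ i ∈ s, DifferentiableOn ℂ (f i) U) :
    DifferentiableOn ℂ (fun x => ∏ i ∈ s, f i x) U := by
  classical
  induction s using Finset.induction with
  | empty => simpa using differentiableOn_const (1 : ℂ)
  | insert _ _ hni ih =>
      rename_i a s'
      simp only [Finset.prod_insert hni]
      exact (h a (Finset.mem_insert_self _ _)).mul
        (ih fun i hi => h i (Finset.mem_insert_of_mem hi))

/-- The determinant of a matrix of differentiable functions is differentiable. -/
lemma aux_diffOn_det {k : ℕ} {U : Set E} (M : E → Matrix (Fin k) (Fin k) ℂ)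
    (h : ∀ i j, DifferentiableOn ℂ (fun x => M x i j) U) :
    DifferentiableOn ℂ (fun x => (M x).det) U := by
  classical
  have hdet : (fun x => (M x).det) =
      fun x => ∑ σ : Equiv.Perm (Fin k),
        ((Equiv.Perm.sign σ : ℤ) : ℂ) * ∏ i, M x (σ i) i := by
    funext x; rw [Matrix.det_apply']
  rw [hdet]
  apply DifferentiableOn.fun_sum
  intro σ _
  exact (differentiableOn_const _).mul (aux_diffOn_prod _ _ fun i _ => h (σ i) i)

/-- A holomorphic function vanishing on a small ball around `a` vanishes on any larger
ball around `a` contained in the domain. -/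
lemma aux_eqOn_zero_ball {f : E → ℂ} {U : Set E} (hU : IsOpen U)
    (hf : DifferentiableOn ℂ f U) {a : E} {R ε : ℝ} (hε : 0 < ε)
    (hball : ball a R ⊆ U) (h0 : EqOn f 0 (ball a ε)) : EqOn f 0 (ball a R) := by
  intro y hy
  rcases eq_or_ne y a with h | h
  · subst h; exact h0 (mem_ball_self hε)
  · set v := y - a with hv
    have hvpos : 0 < ‖v‖ := by
      simpa [hv, sub_eq_zero] using norm_pos_iff.mpr (sub_ne_zero.mpr h)
    have hvR : ‖v‖ < R := by simpa [hv, mem_ball, dist_eq_norm] using hy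
    have hRpos : 0 < R := hvpos.trans hvR
    set g : ℂ → ℂ := fun t => f (a + t • v) with hg
    set D := ball (0 : ℂ) (R / ‖v‖) with hD
    have hmap : ∀ t ∈ D, a + t • v ∈ ball a R := by
      intro t ht
      have ht' : ‖t‖ < R / ‖v‖ := by simpa [hD, mem_ball, dist_eq_norm] using ht
      have : ‖t‖ * ‖v‖ < R := (lt_div_iff₀ hvpos).mp ht'
      simpa [mem_ball, dist_eq_norm, norm_smul, add_sub_cancel_left] using this
    have hgdiff : DifferentiableOn ℂ g D := by
      apply hf.comp
      · exact ((differentiable_const a).add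
          ((differentiable_id).smul_const v)).differentiableOn
      · exact fun t ht => hball (hmap t ht)
    have hganal : AnalyticOnNhd ℂ g D := hgdiff.analyticOnNhd isOpen_ball
    have h0D : (0 : ℂ) ∈ D := by
      simp only [hD, mem_ball, dist_zero_right, norm_zero]
      positivity
    have hz : g =ᶠ[nhds (0 : ℂ)] 0 := by
      have hmem : ball (0 : ℂ) (ε / ‖v‖) ∈ nhds (0 : ℂ) :=
        ball_mem_nhds _ (div_pos hε hvpos)
      filter_upwards [hmem] with t ht
      have ht' : ‖t‖ < ε / ‖v‖ := by simpa [mem_ball, dist_zero_right] using ht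
      have : ‖t‖ * ‖v‖ < ε := (lt_div_iff₀ hvpos).mp ht'
      exact h0 (by simpa [mem_ball, dist_eq_norm, norm_smul, add_sub_cancel_left] using this)
    have hone : (1 : ℂ) ∈ D := by
      simp only [hD, mem_ball, dist_zero_right, norm_one]
      exact (one_lt_div hvpos).mpr hvR
    have := hganal.eqOn_zero_of_preconnected_of_eventuallyEq_zero
      (convex_ball _ _).isPreconnected h0D hz hone
    simpa [hg, hv] using this

/-- Identity theorem: a holomorphic function on a connected open set which vanishes on a
nonempty open subset vanishes identically. -/
lemma aux_eqOn_zero_of_open {f : E → ℂ} {U V : Set E} (hU : IsOpen U)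
    (hUc : IsPreconnected U) (hf : DifferentiableOn ℂ f U) (hV : IsOpen V)
    (hVne : V.Nonempty) (hVU : V ⊆ U) (h0 : EqOn f 0 V) : EqOn f 0 U := by
  set S : Set E := {a | ∃ ε > 0, ball a ε ⊆ U ∧ EqOn f 0 (ball a ε)} with hS
  have hSopen : IsOpen S := by
    rw [isOpen_iff_mem_nhds]
    rintro a ⟨ε, hε, hsub, h0'⟩
    refine Filter.mem_of_superset (ball_mem_nhds a (half_pos hε)) ?_
    intro b hb
    have hba : dist b a < ε / 2 := mem_ball.mp hb
    refine ⟨ε / 2, half_pos hε, ?_, ?_⟩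
    · refine (ball_subset_ball' ?_).trans hsub
      linarith
    · refine h0'.mono (ball_subset_ball' ?_)
      linarith
  have hcl : ∀ a ∈ U, a ∈ closure S → a ∈ S := by
    intro a haU hacl
    obtain ⟨R, hR, hRU⟩ := Metric.isOpen_iff.mp hU a haU
    obtain ⟨b, hbS, hba⟩ := Metric.mem_closure_iff.mp hacl (R / 2) (by positivity)
    obtain ⟨ε, hε, hεU, hb0⟩ := hbS
    have hbR : ball b (R / 2) ⊆ U := by
      refine (ball_subset_ball' ?_).trans hRU
      linarith [dist_comm a b]
    have hmin : (0 : ℝ) < min ε (R / 2) := lt_min hε (by positivity)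
    have h1 : EqOn f 0 (ball b (R / 2)) :=
      aux_eqOn_zero_ball hU hf hmin hbR (hb0.mono (ball_subset_ball (min_le_left _ _)))
    refine ⟨R / 2 - dist a b, ?_, ?_, ?_⟩
    · linarith [dist_comm a b]
    · refine (ball_subset_ball' ?_).trans hbR; linarith
    · refine h1.mono (ball_subset_ball' ?_); linarith
  have hsub : U ⊆ S ∪ (closure S)ᶜ := by
    intro x hx
    by_cases h : x ∈ closure S
    · exact Or.inl (hcl x hx h)
    · exact Or.inr h
  have h1 : (U ∩ S).Nonempty := by
    obtain ⟨v, hv⟩ := hVne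
    obtain ⟨ε, hε, hsub'⟩ := Metric.isOpen_iff.mp hV v hv
    exact ⟨v, hVU hv, ⟨ε, hε, hsub'.trans hVU, h0.mono hsub'⟩⟩
  have h2 : ¬(U ∩ (closure S)ᶜ).Nonempty := by
    intro h2
    obtain ⟨x, hxU, hxS, hxc⟩ :=
      hUc S (closure S)ᶜ hSopen isClosed_closure.isOpen_compl hsub h1 h2
    exact hxc (subset_closure hxS)
  intro x hxU
  have hxS : x ∈ S := hcl x hxU (by
    by_contra hxcl
    exact h2 ⟨x, hxU, hxcl⟩)
  obtain ⟨ε, hε, -, h0'⟩ := hxS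
  exact h0' (mem_ball_self hε)

end Helpers

/-- Let `U ⊆ ℂ^d` be a nonempty connected open set and `A` a family of complex
`m × n` matrices whose entries are holomorphic on `U`.  If `r` is the maximal value of
`rank (A x)` on `U`, then the set where the rank equals `r` is open (so the degeneracy
locus `Z = {x ∈ U | rank (A x) < r}` is relatively closed in `U`), and `Z` has empty
interior. -/
theorem holomorphic_matrix_rank_degeneracy_locus {d m n : ℕ}
    (U : Set (EuclideanSpace ℂ (Fin d))) (hUopen : IsOpen U) (hUconn : IsConnected U)
    (A : EuclideanSpace ℂ (Fin d) → Matrix (Fin m) (Fin n) ℂ)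
    (hA : ∀ i j, DifferentiableOn ℂ (fun x => A x i j) U)
    (r : ℕ) (hr : IsGreatest ((fun x => (A x).rank) '' U) r) :
    IsOpen {x | x ∈ U ∧ (A x).rank = r} ∧
      interior {x | x ∈ U ∧ (A x).rank < r} = ∅ := by
  classical
  have hub : ∀ x ∈ U, (A x).rank ≤ r := fun x hx => hr.2 ⟨x, hx, rfl⟩
  constructor
  · rw [isOpen_iff_mem_nhds]
    rintro x₀ ⟨hx₀U, hx₀r⟩
    obtain ⟨ρ, γ, hdet⟩ := aux_exists_submatrix_det_ne_zero (A x₀) hx₀r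
    set f : EuclideanSpace ℂ (Fin d) → ℂ := fun x => ((A x).submatrix ρ γ).det with hf
    have hfd : DifferentiableOn ℂ f U :=
      aux_diffOn_det (fun x => (A x).submatrix ρ γ) (fun i j => hA (ρ i) (γ j))
    have hfc : ContinuousAt f x₀ :=
      hfd.continuousOn.continuousAt (hUopen.mem_nhds hx₀U)
    have hev : f ⁻¹' ({0}ᶜ) ∈ nhds x₀ :=
      hfc.preimage_mem_nhds (isOpen_compl_singleton.mem_nhds hdet)
    filter_upwards [hev, hUopen.mem_nhds hx₀U] with x hfx hxU
    refine ⟨hxU, le_antisymm (hub x hxU) ?_⟩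
    exact aux_le_rank_of_det_ne_zero (A x) ρ γ hfx
  · by_contra hne
    obtain ⟨x₁, hx₁⟩ := Set.nonempty_iff_ne_empty.mpr hne
    obtain ⟨x₀, hx₀U, hx₀r⟩ := hr.1
    obtain ⟨ρ, γ, hdet⟩ := aux_exists_submatrix_det_ne_zero (A x₀) hx₀r
    set f : EuclideanSpace ℂ (Fin d) → ℂ := fun x => ((A x).submatrix ρ γ).det with hf
    have hfd : DifferentiableOn ℂ f U :=
      aux_diffOn_det (fun x => (A x).submatrix ρ γ) (fun i j => hA (ρ i) (γ j))
    set Z : Set (EuclideanSpace ℂ (Fin d)) := {x | x ∈ U ∧ (A x).rank < r} with hZ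
    have hWU : interior Z ⊆ U := fun x hx => (interior_subset hx).1
    have h0 : Set.EqOn f 0 (interior Z) := by
      intro x hx
      have hxZ := interior_subset hx
      by_contra hfx
      have : f x ≠ 0 := by simpa using hfx
      exact absurd (aux_le_rank_of_det_ne_zero (A x) ρ γ this) (not_le.mpr hxZ.2)
    have hall : Set.EqOn f 0 U :=
      aux_eqOn_zero_of_open hUopen hUconn.isPreconnected hfd isOpen_interior
        ⟨x₁, hx₁⟩ hWU h0
    exact hdet (hall hx₀U)
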